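/- Let (Ω, 𝓕, P) be a probability space, let h ≥ 1 be a natural number, and let g_1, …, g_h : Ω → ℝ^d be independent, identically distributed, square-integrable random vectors with common mean E[g_j] = v ∈ ℝ^d and E‖g_j − v‖² ≤ σ²‖v‖² for a real σ ≥ 0. Let M(ω) = max_{1 ≤ j ≤ h} ‖g_j(ω)‖. Then E[M] ≤ (1 + k_h σ)‖v‖, where k_h = 1 + (h − 1)/√(2h − 1). -/

import Mathlib

open MeasureTheory ProbabilityTheory Set intervalIntegral
open scoped ProbabilityTheory ENNReal

/-- `k_x = 1 + (x - 1)/√(2x - 1)` for `x ≥ 1`. -/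
noncomputable def kfun (x : ℝ) : ℝ := 1 + (x - 1) / Real.sqrt (2 * x - 1)

private lemma aux_aemeasurable_sup' {Ω : Type*} [MeasurableSpace Ω] {μ : Measure Ω}
    {ι : Type*} (s : Finset ι) (hs : s.Nonempty) (f : ι → Ω → ℝ)
    (hf : ∀ i ∈ s, AEMeasurable (f i) μ) :
    AEMeasurable (fun ω => s.sup' hs (fun i => f i ω)) μ := by
  have : AEMeasurable (s.sup' hs f) μ :=
    Finset.sup'_induction (p := fun g => AEMeasurable g μ) hs f
      (fun u hu v hv => hu.sup' hv) hf
  have heq : (fun ω => s.sup' hs (fun i => f i ω)) = s.sup' hs f := by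
    funext ω
    exact (Finset.sup'_apply hs f ω).symm
  rwa [heq]

/-- Elementary computation: `∫⁻ u in (a,1), (c·u^k) du = c·(1-a^(k+1))/(k+1)`. -/
private lemma aux_lintegral_pow (k : ℕ) (c : ℝ) (hc : 0 ≤ c) (a : ℝ) (ha : 0 ≤ a)
    (ha1 : a ≤ 1) :
    ∫⁻ u in Ioo a 1, ENNReal.ofReal (c * u ^ k) ∂(volume) =
      ENNReal.ofReal (c * ((1 - a ^ (k + 1)) / (k + 1))) := by
  have hint : IntegrableOn (fun u : ℝ => c * u ^ k) (Ioo a 1) volume :=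
    (((continuous_const.mul (continuous_pow k)).integrableOn_Icc (a := a) (b := 1))).mono_set
      Ioo_subset_Icc_self
  have hnn : 0 ≤ᵐ[volume.restrict (Ioo a 1)] fun u : ℝ => c * u ^ k := by
    filter_upwards [ae_restrict_mem measurableSet_Ioo] with u hu
    have hu0 : 0 ≤ u := le_of_lt (lt_of_le_of_lt ha hu.1)
    positivity
  rw [← ofReal_integral_eq_lintegral_ofReal hint hnn]
  congr 1
  rw [← integral_Ioc_eq_integral_Ioo, ← intervalIntegral.integral_of_le ha1,
    intervalIntegral.integral_const_mul, integral_pow]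
  rw [one_pow]

/-- Core lemma: for iid nonnegative square-integrable real random variables,
`E[max] ≤ √(n²/(2n-1)) · √(E Y²)`. -/
private lemma core_max_bound {Ω : Type*} [MeasureSpace Ω] [IsProbabilityMeasure (ℙ : Measure Ω)]
    (n : ℕ) (hn : 0 < n) (Y : Fin n → Ω → ℝ)
    (hind : iIndepFun Y ℙ)
    (hid : ∀ j, IdentDistrib (Y j) (Y ⟨0, hn⟩) ℙ ℙ)
    (hpos : ∀ j ω, 0 ≤ Y j ω)
    (hmem : ∀ j, MemLp (Y j) 2 ℙ)
    (S2 : ℝ) (hvar : ∫ ω, (Y ⟨0, hn⟩ ω) ^ 2 ∂ℙ ≤ S2) :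
    ∫ ω, (⨆ j, Y j ω) ∂ℙ ≤ Real.sqrt ((n : ℝ) ^ 2 / (2 * n - 1)) * Real.sqrt S2 := by
  haveI : Nonempty (Fin n) := ⟨⟨0, hn⟩⟩
  set j0 : Fin n := ⟨0, hn⟩ with hj0
  have hY0 : AEMeasurable (Y j0) ℙ := ((hmem j0).aestronglyMeasurable).aemeasurable
  -- the CDF of `Y j0`
  set FE : ℝ → ℝ≥0∞ := fun t => ℙ (Y j0 ⁻¹' Iic t) with hFEdef
  set F : ℝ → ℝ := fun t => (FE t).toReal with hFdef
  have hFE_ne_top : ∀ t, FE t ≠ ∞ := fun t => measure_ne_top _ _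
  have hFE_le_one : ∀ t, FE t ≤ 1 := fun t => prob_le_one
  have hF_nonneg : ∀ t, 0 ≤ F t := fun t => ENNReal.toReal_nonneg
  have hFE_ofReal : ∀ t, ENNReal.ofReal (F t) = FE t :=
    fun t => ENNReal.ofReal_toReal (hFE_ne_top t)
  have hF_le_one : ∀ t, F t ≤ 1 := by
    intro t
    refine ENNReal.toReal_le_of_le_ofReal zero_le_one ?_
    rw [ENNReal.ofReal_one]
    exact hFE_le_one t
  have hFE_mono : Monotone FE := fun s t hst =>
    measure_mono (preimage_mono (Iic_subset_Iic.2 hst))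
  have hF_mono : Monotone F := fun s t hst =>
    ENNReal.toReal_mono (hFE_ne_top t) (hFE_mono hst)
  have hFE_neg : ∀ t : ℝ, t < 0 → FE t = 0 := by
    intro t ht
    have hempty : Y j0 ⁻¹' Iic t = ∅ := by
      ext ω
      simp only [mem_preimage, mem_Iic, mem_empty_iff_false, iff_false, not_le]
      exact lt_of_lt_of_le ht (hpos j0 ω)
    rw [hFEdef]
    simp [hempty]
  -- right-continuity of the CDF
  have hFright : ∀ t u : ℝ, (∀ ε : ℝ, 0 < ε → u ≤ F (t + ε)) → u ≤ F t := by
    intro t u hu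
    have hsets : ∀ k : ℕ, NullMeasurableSet (Y j0 ⁻¹' Iic (t + 1 / (k + 1))) ℙ :=
      fun k => hY0.nullMeasurable measurableSet_Iic
    have hanti : Antitone fun k : ℕ => Y j0 ⁻¹' Iic (t + 1 / (k + 1)) := by
      intro a b hab
      refine preimage_mono (Iic_subset_Iic.2 ?_)
      have hab' : ((a : ℝ) + 1) ≤ (b : ℝ) + 1 := by exact_mod_cast Nat.succ_le_succ hab
      have h1 : (1 : ℝ) / ((b : ℝ) + 1) ≤ 1 / ((a : ℝ) + 1) :=
        one_div_le_one_div_of_le (by positivity) hab'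
      linarith
    have hiInter : (⋂ k : ℕ, Y j0 ⁻¹' Iic (t + 1 / (k + 1))) = Y j0 ⁻¹' Iic t := by
      ext ω
      simp only [mem_iInter, mem_preimage, mem_Iic]
      constructor
      · intro hk
        refine le_of_forall_pos_le_add fun ε hε => ?_
        obtain ⟨k, hkε⟩ := exists_nat_one_div_lt hε
        exact (hk k).trans (by linarith)
      · intro hω k
        have h1 : (0 : ℝ) < 1 / ((k : ℝ) + 1) := by positivity
        linarith
    have htend : Filter.Tendsto (fun k : ℕ => FE (t + 1 / (k + 1))) Filter.atTop (nhds (FE t)) := by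
      have h := tendsto_measure_iInter_atTop (μ := ℙ) hsets hanti ⟨0, measure_ne_top _ _⟩
      rw [hiInter] at h
      exact h
    have hk : ∀ k : ℕ, ENNReal.ofReal u ≤ FE (t + 1 / (k + 1)) := by
      intro k
      rw [← hFE_ofReal]
      exact ENNReal.ofReal_le_ofReal (hu _ (by positivity))
    have hle : ENNReal.ofReal u ≤ FE t := ge_of_tendsto' htend hk
    rcases le_or_gt u 0 with h0 | h0
    · exact h0.trans (hF_nonneg t)
    · rw [← hFE_ofReal t] at hle
      exact (ENNReal.ofReal_le_ofReal_iff (hF_nonneg t)).1 hle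
  -- the CDF reaches any level `u < 1`
  have hreach : ∀ u : ℝ, u < 1 → ∃ t : ℝ, 0 ≤ t ∧ u ≤ F t := by
    intro u hu
    have hmono : Monotone fun k : ℕ => Y j0 ⁻¹' Iic (k : ℝ) := fun a b hab =>
      preimage_mono (Iic_subset_Iic.2 (by exact_mod_cast hab))
    have hunion : (⋃ k : ℕ, Y j0 ⁻¹' Iic (k : ℝ)) = univ := by
      ext ω
      simp only [mem_iUnion, mem_preimage, mem_Iic, mem_univ, iff_true]
      exact exists_nat_ge (Y j0 ω)
    have h1 : (1 : ℝ≥0∞) = ⨆ k : ℕ, FE (k : ℝ) := by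
      have h := hmono.measure_iUnion (μ := ℙ)
      rw [hunion, measure_univ] at h
      exact h
    have h2 : ENNReal.ofReal u < ⨆ k : ℕ, FE (k : ℝ) := by
      rw [← h1]
      exact ENNReal.ofReal_lt_one.2 hu
    obtain ⟨k, hk⟩ := lt_iSup_iff.1 h2
    refine ⟨(k : ℝ), Nat.cast_nonneg k, ?_⟩
    rcases le_or_gt u 0 with h0 | h0
    · exact h0.trans (hF_nonneg _)
    · rw [← hFE_ofReal (k : ℝ)] at hk
      exact (ENNReal.ofReal_le_ofReal_iff (hF_nonneg _)).1 hk.le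
  -- the quantile function
  set Q : ℝ → ℝ := fun u => sInf {t : ℝ | 0 ≤ t ∧ u ≤ F t} with hQdef
  have hQbdd : ∀ u : ℝ, BddBelow {t : ℝ | 0 ≤ t ∧ u ≤ F t} := fun u => ⟨0, fun t ht => ht.1⟩
  have hQne : ∀ u : ℝ, u < 1 → {t : ℝ | 0 ≤ t ∧ u ≤ F t}.Nonempty := fun u hu => hreach u hu
  have hQnonneg : ∀ u ∈ Ioo (0 : ℝ) 1, 0 ≤ Q u := fun u hu =>
    le_csInf (hQne u hu.2) fun t ht => ht.1
  have hgal : ∀ u ∈ Ioo (0 : ℝ) 1, ∀ s : ℝ, Q u ≤ s ↔ u ≤ F s := by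
    intro u hu s
    constructor
    · intro hQs
      refine hFright s u fun ε hε => ?_
      have hlt : sInf {t : ℝ | 0 ≤ t ∧ u ≤ F t} < s + ε := lt_of_le_of_lt hQs (by linarith)
      obtain ⟨t, ht, hts⟩ := (csInf_lt_iff (hQbdd u) (hQne u hu.2)).1 hlt
      exact ht.2.trans (hF_mono hts.le)
    · intro hs
      rcases le_or_gt 0 s with h0 | h0
      · exact csInf_le (hQbdd u) ⟨h0, hs⟩
      · exfalso
        have hF0 : F s = 0 := by
          show (FE s).toReal = 0
          rw [hFE_neg s h0]
          simp
        rw [hF0] at hs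
        exact absurd (lt_of_lt_of_le hu.1 hs) (lt_irrefl 0)
  have hQlt : ∀ u ∈ Ioo (0 : ℝ) 1, ∀ s : ℝ, s < Q u ↔ F s < u := by
    intro u hu s
    constructor
    · intro hlt
      by_contra hc
      push_neg at hc
      exact absurd ((hgal u hu s).2 hc) (not_le.2 hlt)
    · intro hlt
      by_contra hc
      push_neg at hc
      exact absurd ((hgal u hu s).1 hc) (not_le.2 hlt)
  have hQmonoOn : MonotoneOn Q (Ioo (0 : ℝ) 1) := by
    intro u hu u' hu' huu'
    exact (hgal u hu (Q u')).2 (huu'.trans ((hgal u' hu' (Q u')).1 le_rfl))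
  -- measurable modification of the quantile function
  set ν : Measure ℝ := volume.restrict (Ioo (0 : ℝ) 1) with hνdef
  have hQae : AEMeasurable Q ν := aemeasurable_restrict_of_monotoneOn measurableSet_Ioo hQmonoOn
  set Qm : ℝ → ℝ := hQae.mk Q with hQmdef
  have hQm : Measurable Qm := hQae.measurable_mk
  have hQQm : Q =ᵐ[ν] Qm := hQae.ae_eq_mk
  have hQQm' : ∀ᵐ u ∂(volume : Measure ℝ), u ∈ Ioo (0 : ℝ) 1 → Q u = Qm u :=
    ae_imp_of_ae_restrict hQQm
  -- the density
  set w : ℝ → ℝ≥0∞ := fun u => ENNReal.ofReal ((n : ℝ) * u ^ (n - 1)) with hwdef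
  have hwmeas : Measurable w :=
    (((measurable_id.pow_const (n - 1)).const_mul (n : ℝ))).ennreal_ofReal
  set μw : Measure ℝ := ν.withDensity w with hμwdef
  -- basic facts about the supremum
  have hbdd : ∀ ω, BddAbove (Set.range fun j => Y j ω) := fun ω => (Set.finite_range _).bddAbove
  have hsup_nonneg : ∀ ω, 0 ≤ ⨆ j, Y j ω :=
    fun ω => le_trans (hpos j0 ω) (le_ciSup (hbdd ω) j0)
  have hsupae : AEMeasurable (fun ω => ⨆ j, Y j ω) ℙ := by
    have h := aux_aemeasurable_sup' (Finset.univ : Finset (Fin n)) Finset.univ_nonempty Y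
      (fun i _ => ((hmem i).aestronglyMeasurable).aemeasurable)
    convert h using 2 with ω
    exact (Finset.sup'_univ_eq_ciSup fun j => Y j ω).symm
  -- distribution of the supremum
  have hPsup : ∀ t : ℝ, ℙ {ω | t < ⨆ j, Y j ω} = ENNReal.ofReal (1 - F t ^ n) := by
    intro t
    have hset1 : {ω | (⨆ j, Y j ω) ≤ t} = ⋂ j, Y j ⁻¹' Iic t := by
      ext ω
      simp only [mem_setOf_eq, mem_iInter, mem_preimage, mem_Iic]
      exact ciSup_le_iff (hbdd ω)
    have hmeasInter : ℙ (⋂ j, Y j ⁻¹' Iic t) = FE t ^ n := by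
      rw [hind.meas_iInter fun j => ⟨Iic t, measurableSet_Iic, rfl⟩]
      have hident : ∀ j : Fin n, ℙ (Y j ⁻¹' Iic t) = FE t :=
        fun j => (hid j).measure_mem_eq measurableSet_Iic
      rw [Finset.prod_congr rfl fun j _ => hident j, Finset.prod_const, Finset.card_univ,
        Fintype.card_fin]
    have hcompl : {ω | t < ⨆ j, Y j ω} = {ω | (⨆ j, Y j ω) ≤ t}ᶜ := by
      ext ω
      simp [not_le]
    calc ℙ {ω | t < ⨆ j, Y j ω} = 1 - ℙ {ω | (⨆ j, Y j ω) ≤ t} := by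
          rw [hcompl]
          exact prob_compl_eq_one_sub₀ (hsupae.nullMeasurable measurableSet_Iic)
      _ = 1 - FE t ^ n := by rw [hset1, hmeasInter]
      _ = ENNReal.ofReal (1 - F t ^ n) := by
          rw [← hFE_ofReal t, ← ENNReal.ofReal_pow (hF_nonneg t), ← ENNReal.ofReal_one,
            ← ENNReal.ofReal_sub _ (by positivity)]
  -- distribution of `Qm` under `μw`
  have hQmset : ∀ t : ℝ, 0 ≤ t → μw {u | t < Qm u} = ENNReal.ofReal (1 - F t ^ n) := by
    intro t ht
    have hms : MeasurableSet {u | t < Qm u} := measurableSet_lt measurable_const hQm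
    rw [hμwdef, withDensity_apply _ hms, hνdef, Measure.restrict_restrict hms]
    have hae : ({u | t < Qm u} ∩ Ioo 0 1 : Set ℝ) =ᵐ[(volume : Measure ℝ)] Ioo (F t) 1 := by
      rw [Filter.eventuallyEq_set]
      filter_upwards [hQQm'] with u himp
      simp only [mem_inter_iff, mem_setOf_eq, mem_Ioo]
      constructor
      · rintro ⟨h1, h2, h3⟩
        rw [← himp ⟨h2, h3⟩] at h1
        exact ⟨(hQlt u ⟨h2, h3⟩ t).1 h1, h3⟩
      · rintro ⟨h1, h2⟩
        have hu0 : 0 < u := lt_of_le_of_lt (hF_nonneg t) h1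
        refine ⟨?_, hu0, h2⟩
        rw [← himp ⟨hu0, h2⟩]
        exact (hQlt u ⟨hu0, h2⟩ t).2 h1
    rw [setLIntegral_congr hae]
    have haux := aux_lintegral_pow (n - 1) (n : ℝ) (Nat.cast_nonneg n) (F t) (hF_nonneg t)
      (hF_le_one t)
    rw [hwdef]
    rw [haux]
    have hn1 : n - 1 + 1 = n := by omega
    rw [hn1]
    have hn2 : ((n - 1 : ℕ) : ℝ) + 1 = (n : ℝ) := by
      rw [Nat.cast_sub (by omega : 1 ≤ n)]
      push_cast
      ring
    rw [hn2]
    congr 1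
    field_simp
  -- E[sup Y] as an integral of `Qm`
  have hEmax : ∫⁻ ω, ENNReal.ofReal (⨆ j, Y j ω) ∂ℙ = ∫⁻ u, ENNReal.ofReal (Qm u) ∂μw := by
    rw [lintegral_eq_lintegral_meas_lt ℙ (ae_of_all _ hsup_nonneg) hsupae]
    have hQm_nonneg_ae : 0 ≤ᵐ[ν] Qm := by
      filter_upwards [hQQm, ae_restrict_mem measurableSet_Ioo] with u h1 h2
      rw [← h1]
      exact hQnonneg u h2
    have hLC2 : ∫⁻ u, ENNReal.ofReal (Qm u) ∂μw = ∫⁻ t in Ioi (0 : ℝ), μw {u | t < Qm u} := by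
      refine lintegral_eq_lintegral_meas_lt μw ?_ hQm.aemeasurable
      exact hQm_nonneg_ae.filter_mono (withDensity_absolutelyContinuous ν w).ae_le
    rw [hLC2]
    refine setLIntegral_congr_fun measurableSet_Ioi (fun t ht => ?_)
    rw [hPsup t, hQmset t (le_of_lt ht)]
  -- E[Y²] as an integral of `Qm²`
  have hsq_iff : ∀ t : ℝ, 0 < t → ∀ y : ℝ, 0 ≤ y → (t < y ^ 2 ↔ Real.sqrt t < y) := by
    intro t ht y hy
    rcases eq_or_lt_of_le hy with h0 | h0
    · constructor
      · intro hlt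
        exfalso
        rw [← h0] at hlt
        simp at hlt
        linarith
      · intro hlt
        exfalso
        rw [← h0] at hlt
        exact absurd hlt (not_lt.2 (Real.sqrt_nonneg t))
    · exact (Real.sqrt_lt' h0).symm
  have hQ2 : ∫⁻ u, ENNReal.ofReal (Qm u) ^ (2 : ℝ) ∂ν =
      ∫⁻ ω, ENNReal.ofReal ((Y j0 ω) ^ 2) ∂ℙ := by
    have hstep : ∫⁻ u, ENNReal.ofReal (Qm u) ^ (2 : ℝ) ∂ν =
        ∫⁻ u, ENNReal.ofReal ((Qm u) ^ 2) ∂ν := by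
      refine lintegral_congr_ae ?_
      filter_upwards [hQQm, ae_restrict_mem measurableSet_Ioo] with u h1 h2
      have h0 : 0 ≤ Qm u := by rw [← h1]; exact hQnonneg u h2
      have h2' : ((2 : ℝ)) = ((2 : ℕ) : ℝ) := by norm_num
      rw [h2', ENNReal.rpow_natCast, ← ENNReal.ofReal_pow h0]
    rw [hstep]
    have hLCq : ∫⁻ u, ENNReal.ofReal ((Qm u) ^ 2) ∂ν =
        ∫⁻ t in Ioi (0 : ℝ), ν {u | t < (Qm u) ^ 2} :=
      lintegral_eq_lintegral_meas_lt ν (ae_of_all _ fun u => sq_nonneg _)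
        (hQm.pow_const 2).aemeasurable
    have hLCy : ∫⁻ ω, ENNReal.ofReal ((Y j0 ω) ^ 2) ∂ℙ =
        ∫⁻ t in Ioi (0 : ℝ), ℙ {ω | t < (Y j0 ω) ^ 2} :=
      lintegral_eq_lintegral_meas_lt ℙ (ae_of_all _ fun ω => sq_nonneg _)
        (hY0.pow_const 2)
    rw [hLCq, hLCy]
    refine setLIntegral_congr_fun measurableSet_Ioi (fun t ht => ?_)
    have ht' : (0 : ℝ) < t := ht
    have hν_eq : ν {u | t < (Qm u) ^ 2} = ENNReal.ofReal (1 - F (Real.sqrt t)) := by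
      have hae2 : ({u | t < (Qm u) ^ 2} : Set ℝ) =ᵐ[ν] Ioo (F (Real.sqrt t)) 1 := by
        rw [Filter.eventuallyEq_set]
        filter_upwards [hQQm, ae_restrict_mem measurableSet_Ioo] with u h1 h2
        simp only [mem_setOf_eq, mem_Ioo]
        rw [← h1, hsq_iff t ht' (Q u) (hQnonneg u h2)]
        constructor
        · intro hlt
          exact ⟨(hQlt u h2 _).1 hlt, h2.2⟩
        · rintro ⟨ha, _⟩
          exact (hQlt u h2 _).2 ha
      rw [measure_congr hae2, hνdef, Measure.restrict_apply' measurableSet_Ioo]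
      have hsub : Ioo (F (Real.sqrt t)) 1 ∩ Ioo (0 : ℝ) 1 = Ioo (F (Real.sqrt t)) 1 := by
        refine inter_eq_left.2 fun x hx => ⟨lt_of_le_of_lt (hF_nonneg _) hx.1, hx.2⟩
      rw [hsub, Real.volume_Ioo]
    have hP_eq : ℙ {ω | t < (Y j0 ω) ^ 2} = ENNReal.ofReal (1 - F (Real.sqrt t)) := by
      have hset : {ω | t < (Y j0 ω) ^ 2} = (Y j0 ⁻¹' Iic (Real.sqrt t))ᶜ := by
        ext ω
        simp only [mem_setOf_eq, mem_compl_iff, mem_preimage, mem_Iic, not_le]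
        exact hsq_iff t ht' _ (hpos j0 ω)
      rw [hset, prob_compl_eq_one_sub₀ (hY0.nullMeasurable measurableSet_Iic)]
      show (1 : ℝ≥0∞) - FE (Real.sqrt t) = ENNReal.ofReal (1 - F (Real.sqrt t))
      rw [← hFE_ofReal, ← ENNReal.ofReal_one, ← ENNReal.ofReal_sub _ (hF_nonneg _)]
    rw [hν_eq, hP_eq]
  have hY2 : ∫⁻ ω, ENNReal.ofReal ((Y j0 ω) ^ 2) ∂ℙ = ENNReal.ofReal (∫ ω, (Y j0 ω) ^ 2 ∂ℙ) :=
    (ofReal_integral_eq_lintegral_ofReal (hmem j0).integrable_sq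
      (ae_of_all _ fun ω => sq_nonneg _)).symm
  -- the squared density integral
  have hw2 : ∫⁻ u, (w u) ^ (2 : ℝ) ∂ν = ENNReal.ofReal ((n : ℝ) ^ 2 / (2 * n - 1)) := by
    have hcong : ∫⁻ u, (w u) ^ (2 : ℝ) ∂ν =
        ∫⁻ u in Ioo (0 : ℝ) 1, ENNReal.ofReal ((n : ℝ) ^ 2 * u ^ (2 * n - 2)) ∂(volume) := by
      rw [hνdef]
      refine setLIntegral_congr_fun measurableSet_Ioo (fun u hu => ?_)
      rw [hwdef]
      have hnn : (0 : ℝ) ≤ (n : ℝ) * u ^ (n - 1) := by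
        have := hu.1.le
        positivity
      have h2' : ((2 : ℝ)) = ((2 : ℕ) : ℝ) := by norm_num
      rw [h2', ENNReal.rpow_natCast, ← ENNReal.ofReal_pow hnn]
      congr 1
      rw [mul_pow, ← pow_mul]
      congr 2
      omega
    rw [hcong]
    have haux := aux_lintegral_pow (2 * n - 2) ((n : ℝ) ^ 2) (by positivity) 0 le_rfl zero_le_one
    rw [haux]
    have h1 : 2 * n - 2 + 1 = 2 * n - 1 := by omega
    rw [h1]
    have h2 : ((2 * n - 2 : ℕ) : ℝ) + 1 = 2 * (n : ℝ) - 1 := by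
      rw [Nat.cast_sub (by omega : 2 ≤ 2 * n)]
      push_cast
      ring
    rw [h2, zero_pow (by omega : 2 * n - 1 ≠ 0)]
    congr 1
    ring
  -- Hölder's inequality
  have hconj : Real.HolderConjugate 2 2 := Real.HolderConjugate.two_two
  have hprod : ∫⁻ u, ENNReal.ofReal (Qm u) ∂μw =
      ∫⁻ u, (w * fun u => ENNReal.ofReal (Qm u)) u ∂ν :=
    lintegral_withDensity_eq_lintegral_mul ν hwmeas hQm.ennreal_ofReal
  have hholder := ENNReal.lintegral_mul_le_Lp_mul_Lq ν hconj hwmeas.aemeasurable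
    hQm.ennreal_ofReal.aemeasurable
  have hS2 : (0 : ℝ) ≤ S2 := le_trans (integral_nonneg fun ω => sq_nonneg _) hvar
  have hden : (0 : ℝ) < 2 * (n : ℝ) - 1 := by
    have h1 : (1 : ℝ) ≤ (n : ℝ) := by exact_mod_cast hn
    linarith
  have hfrac : (0 : ℝ) ≤ (n : ℝ) ^ 2 / (2 * n - 1) := div_nonneg (by positivity) hden.le
  have hfinal : ∫⁻ ω, ENNReal.ofReal (⨆ j, Y j ω) ∂ℙ ≤
      ENNReal.ofReal (Real.sqrt ((n : ℝ) ^ 2 / (2 * n - 1)) * Real.sqrt S2) := by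
    rw [hEmax, hprod]
    calc ∫⁻ u, (w * fun u => ENNReal.ofReal (Qm u)) u ∂ν
        ≤ (∫⁻ u, (w u) ^ (2 : ℝ) ∂ν) ^ (1 / 2 : ℝ) *
          (∫⁻ u, ENNReal.ofReal (Qm u) ^ (2 : ℝ) ∂ν) ^ (1 / 2 : ℝ) := hholder
      _ ≤ (ENNReal.ofReal ((n : ℝ) ^ 2 / (2 * n - 1))) ^ (1 / 2 : ℝ) *
          (ENNReal.ofReal S2) ^ (1 / 2 : ℝ) := by
          refine mul_le_mul' (le_of_eq (by rw [hw2])) ?_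
          refine ENNReal.rpow_le_rpow ?_ (by norm_num)
          rw [hQ2, hY2]
          exact ENNReal.ofReal_le_ofReal hvar
      _ = ENNReal.ofReal (Real.sqrt ((n : ℝ) ^ 2 / (2 * n - 1)) * Real.sqrt S2) := by
          rw [ENNReal.ofReal_rpow_of_nonneg hfrac (by norm_num : (0:ℝ) ≤ 1/2),
            ENNReal.ofReal_rpow_of_nonneg hS2 (by norm_num : (0:ℝ) ≤ 1/2),
            ← ENNReal.ofReal_mul (Real.rpow_nonneg hfrac _), Real.sqrt_eq_rpow,
            Real.sqrt_eq_rpow]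
  have hintrepr : ∫ ω, (⨆ j, Y j ω) ∂ℙ = (∫⁻ ω, ENNReal.ofReal (⨆ j, Y j ω) ∂ℙ).toReal :=
    integral_eq_lintegral_of_nonneg_ae (ae_of_all _ hsup_nonneg) hsupae.aestronglyMeasurable
  rw [hintrepr]
  exact ENNReal.toReal_le_of_le_ofReal (by positivity) hfinal

theorem expectation_max_norm_le
    {Ω : Type*} [MeasureSpace Ω] [IsProbabilityMeasure (ℙ : Measure Ω)]
    (d h : ℕ) (hh : 1 ≤ h)
    (g : Fin h → Ω → EuclideanSpace ℝ (Fin d))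
    (hindep : iIndepFun g ℙ)
    (hident : ∀ i j, IdentDistrib (g i) (g j) ℙ ℙ)
    (hL2 : ∀ j, MemLp (g j) 2 ℙ)
    (v : EuclideanSpace ℝ (Fin d)) (hmean : ∀ j, ∫ ω, g j ω ∂ℙ = v)
    (σ : ℝ) (hσ : 0 ≤ σ) (hvar : ∀ j, ∫ ω, ‖g j ω - v‖ ^ 2 ∂ℙ ≤ σ ^ 2 * ‖v‖ ^ 2) :
    ∫ ω, (⨆ j : Fin h, ‖g j ω‖) ∂ℙ ≤ (1 + kfun h * σ) * ‖v‖ := by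
  have hn : 0 < h := hh
  haveI : Nonempty (Fin h) := ⟨⟨0, hn⟩⟩
  set Y : Fin h → Ω → ℝ := fun j ω => ‖g j ω - v‖ with hYdef
  have hmapmeas : Measurable (fun x : EuclideanSpace ℝ (Fin d) => ‖x - v‖) :=
    ((continuous_id.sub continuous_const).norm).measurable
  have hindY : iIndepFun Y ℙ :=
    hindep.comp (fun _ x => ‖x - v‖) (fun _ => hmapmeas)
  have hidY : ∀ j, IdentDistrib (Y j) (Y ⟨0, hn⟩) ℙ ℙ :=
    fun j => (hident j ⟨0, hn⟩).comp hmapmeas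
  have hposY : ∀ j ω, 0 ≤ Y j ω := fun j ω => norm_nonneg _
  have hmemY : ∀ j, MemLp (Y j) 2 ℙ := fun j => ((hL2 j).sub (memLp_const v)).norm
  have hcore := core_max_bound h hn Y hindY hidY hposY hmemY (σ ^ 2 * ‖v‖ ^ 2) (hvar ⟨0, hn⟩)
  -- integrability of the suprema
  have hYint : ∀ j, Integrable (Y j) ℙ := fun j => (hmemY j).integrable one_le_two
  have hsupYae : AEMeasurable (fun ω => ⨆ j, Y j ω) ℙ := by
    have := aux_aemeasurable_sup' (Finset.univ : Finset (Fin h)) Finset.univ_nonempty Y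
      (fun i _ => (hYint i).aemeasurable)
    convert this using 2 with ω
    exact (Finset.sup'_univ_eq_ciSup (fun j => Y j ω)).symm
  have hbddY : ∀ ω, BddAbove (Set.range fun j => Y j ω) :=
    fun ω => (Set.finite_range _).bddAbove
  have hsupY_le_sum : ∀ ω, (⨆ j, Y j ω) ≤ ∑ j, Y j ω := by
    intro ω
    refine ciSup_le fun j => ?_
    exact Finset.single_le_sum (fun i _ => hposY i ω) (Finset.mem_univ j)
  have hsupY_nonneg : ∀ ω, 0 ≤ ⨆ j, Y j ω :=
    fun ω => le_trans (hposY ⟨0, hn⟩ ω) (le_ciSup (hbddY ω) _)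
  have hsupYint : Integrable (fun ω => ⨆ j, Y j ω) ℙ := by
    refine Integrable.mono' (integrable_finset_sum Finset.univ fun j _ => hYint j)
      hsupYae.aestronglyMeasurable (ae_of_all _ fun ω => ?_)
    rw [Real.norm_eq_abs, abs_of_nonneg (hsupY_nonneg ω)]
    exact hsupY_le_sum ω
  -- step 1 : E[sup ‖g‖] ≤ ‖v‖ + E[sup Y]
  have hstep1 : ∫ ω, (⨆ j : Fin h, ‖g j ω‖) ∂ℙ ≤ ‖v‖ + ∫ ω, (⨆ j, Y j ω) ∂ℙ := by
    have hrhs : Integrable (fun ω => ‖v‖ + ⨆ j, Y j ω) ℙ :=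
      (integrable_const _).add hsupYint
    have hle : ∀ ω, (⨆ j : Fin h, ‖g j ω‖) ≤ ‖v‖ + ⨆ j, Y j ω := by
      intro ω
      refine ciSup_le fun j => ?_
      have h1 : ‖g j ω‖ ≤ ‖v‖ + Y j ω := by
        have := norm_add_le v (g j ω - v)
        simpa using this
      exact h1.trans (by
        have : Y j ω ≤ ⨆ i, Y i ω := le_ciSup (hbddY ω) j
        linarith)
    calc ∫ ω, (⨆ j : Fin h, ‖g j ω‖) ∂ℙ
        ≤ ∫ ω, (‖v‖ + ⨆ j, Y j ω) ∂ℙ := by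
          refine integral_mono_of_nonneg (ae_of_all _ fun ω => ?_) hrhs
            (ae_of_all _ hle)
          exact le_trans (norm_nonneg (g ⟨0, hn⟩ ω))
            (le_ciSup (f := fun j : Fin h => ‖g j ω‖)
              ((Set.finite_range _).bddAbove) ⟨0, hn⟩)
      _ = ‖v‖ + ∫ ω, (⨆ j, Y j ω) ∂ℙ := by
          rw [integral_add (integrable_const _) hsupYint,
            MeasureTheory.integral_const]
          simp
  -- final arithmetic
  have hsq : Real.sqrt (σ ^ 2 * ‖v‖ ^ 2) = σ * ‖v‖ := by
    rw [← mul_pow, Real.sqrt_sq (by positivity)]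
  have hsqrt_pos : (1 : ℝ) ≤ Real.sqrt (2 * h - 1) := by
    rw [Real.one_le_sqrt]
    have : (1 : ℝ) ≤ (h : ℝ) := by exact_mod_cast hn
    linarith
  have hden_pos : (0 : ℝ) < Real.sqrt (2 * h - 1) := lt_of_lt_of_le one_pos hsqrt_pos
  have hc : Real.sqrt ((h : ℝ) ^ 2 / (2 * h - 1)) ≤ kfun h := by
    have h1 : (1 : ℝ) ≤ (h : ℝ) := by exact_mod_cast hn
    have hnum : Real.sqrt ((h : ℝ) ^ 2 / (2 * h - 1)) = (h : ℝ) / Real.sqrt (2 * h - 1) := by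
      rw [Real.sqrt_div (by positivity) _, Real.sqrt_sq (by positivity)]
    rw [hnum, kfun]
    have heq : (h : ℝ) / Real.sqrt (2 * h - 1)
        = ((h : ℝ) - 1) / Real.sqrt (2 * h - 1) + 1 / Real.sqrt (2 * h - 1) := by
      ring
    rw [heq]
    have h2 : 1 / Real.sqrt (2 * (h : ℝ) - 1) ≤ 1 := by
      rw [div_le_one hden_pos]; exact hsqrt_pos
    linarith
  calc ∫ ω, (⨆ j : Fin h, ‖g j ω‖) ∂ℙ ≤ ‖v‖ + ∫ ω, (⨆ j, Y j ω) ∂ℙ := hstep1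
    _ ≤ ‖v‖ + Real.sqrt ((h : ℝ) ^ 2 / (2 * h - 1)) * (σ * ‖v‖) := by
        rw [← hsq]; linarith
    _ ≤ ‖v‖ + kfun h * (σ * ‖v‖) := by
        have := mul_le_mul_of_nonneg_right hc (by positivity : (0:ℝ) ≤ σ * ‖v‖)
        linarith
    _ = (1 + kfun h * σ) * ‖v‖ := by ring
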